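/- Let Ω ≠ 0, B₀ > 0, E₀ ∈ ℂ, x₀ ∈ ℝ. The general solution Q(x) := 1/P(x)² of the linear ODE Q'' + (2(x−x₀)/((x−x₀)²+Ω²)) Q' + (4Ω²/((x−x₀)²+Ω²)²) Q = −16|E₀|²/(B₀⁴((x−x₀)²+Ω²)²) is Q(x) = (c₁(Ω² − (x−x₀)²) + 2c₂ Ω(x−x₀) − 8|E₀|²/B₀⁴)/(Ω² + (x−x₀)²) for constants c₁, c₂ ∈ ℝ; i.e., any function of this form solves the ODE. -/

import Mathlib

set_option maxHeartbeats 1000000 in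
/-- The proposed two-parameter family solves the linear ODE for `Q = 1/P²`
determining the frame function of the axisymmetric extremal electrovac IH. -/
theorem stmt5 (Ω B₀ x₀ c₁ c₂ : ℝ) (E₀ : ℂ) (hΩ : Ω ≠ 0) (hB₀ : 0 < B₀) :
    let Q : ℝ → ℝ := fun x =>
      (c₁ * (Ω ^ 2 - (x - x₀) ^ 2) + 2 * c₂ * Ω * (x - x₀)
        - 8 * ‖E₀‖ ^ 2 / B₀ ^ 4) / (Ω ^ 2 + (x - x₀) ^ 2)
    ∀ x : ℝ,
      deriv (deriv Q) x
        + (2 * (x - x₀) / ((x - x₀) ^ 2 + Ω ^ 2)) * deriv Q x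
        + (4 * Ω ^ 2 / ((x - x₀) ^ 2 + Ω ^ 2) ^ 2) * Q x
      = -(16 * ‖E₀‖ ^ 2) / (B₀ ^ 4 * ((x - x₀) ^ 2 + Ω ^ 2) ^ 2) := by
  intro Q x
  set K : ℝ := 8 * ‖E₀‖ ^ 2 / B₀ ^ 4 with hK
  have hg : ∀ y : ℝ, Ω ^ 2 + (y - x₀) ^ 2 ≠ 0 := by
    intro y; positivity
  have hu : ∀ y : ℝ, HasDerivAt (fun t : ℝ => t - x₀) 1 y := fun y =>
    (hasDerivAt_id y).sub_const _
  have hu2 : ∀ y : ℝ, HasDerivAt (fun t : ℝ => (t - x₀) ^ 2) (2 * (y - x₀)) y := by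
    intro y
    simpa [mul_comm] using (hu y).fun_pow 2
  have hN : ∀ y : ℝ, HasDerivAt
      (fun t : ℝ => c₁ * (Ω ^ 2 - (t - x₀) ^ 2) + 2 * c₂ * Ω * (t - x₀) - K)
      (c₁ * (0 - 2 * (y - x₀)) + 2 * c₂ * Ω * 1) y := by
    intro y
    exact ((((hasDerivAt_const y (Ω ^ 2)).sub (hu2 y)).const_mul c₁).add
      ((hu y).const_mul (2 * c₂ * Ω))).sub_const K
  have hD : ∀ y : ℝ, HasDerivAt (fun t : ℝ => Ω ^ 2 + (t - x₀) ^ 2)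
      (2 * (y - x₀)) y := by
    intro y
    simpa using (hasDerivAt_const y (Ω ^ 2)).fun_add (hu2 y)
  -- first derivative, simplified form
  set Q1 : ℝ → ℝ := fun y =>
    (2 * c₂ * Ω * (Ω ^ 2 - (y - x₀) ^ 2) - 4 * c₁ * Ω ^ 2 * (y - x₀)
      + 2 * K * (y - x₀)) / (Ω ^ 2 + (y - x₀) ^ 2) ^ 2 with hQ1
  have hQ' : ∀ y : ℝ, HasDerivAt Q (Q1 y) y := by
    intro y
    have h := (hN y).fun_div (hD y) (hg y)
    refine h.congr_deriv (Eq.symm ?_)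
    rw [hQ1]
    have h2 : (Ω ^ 2 + (y - x₀) ^ 2) ^ 2 ≠ 0 := pow_ne_zero _ (hg y)
    field_simp
    ring
  have hderivQ : deriv Q = Q1 := funext fun y => (hQ' y).deriv
  -- second derivative, simplified form
  have hQ'' : HasDerivAt Q1
      ((4 * c₂ * Ω * (x - x₀) ^ 3 - 12 * c₂ * Ω ^ 3 * (x - x₀) - 4 * c₁ * Ω ^ 4
        + 12 * c₁ * Ω ^ 2 * (x - x₀) ^ 2 + 2 * K * Ω ^ 2 - 6 * K * (x - x₀) ^ 2)
        / (Ω ^ 2 + (x - x₀) ^ 2) ^ 3) x := by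
    have hN1 : HasDerivAt
        (fun y : ℝ => 2 * c₂ * Ω * (Ω ^ 2 - (y - x₀) ^ 2) - 4 * c₁ * Ω ^ 2 * (y - x₀)
          + 2 * K * (y - x₀))
        (2 * c₂ * Ω * (0 - 2 * (x - x₀)) - 4 * c₁ * Ω ^ 2 * 1 + 2 * K * 1) x :=
      ((((hasDerivAt_const x (Ω ^ 2)).sub (hu2 x)).const_mul (2 * c₂ * Ω)).sub
        ((hu x).const_mul (4 * c₁ * Ω ^ 2))).add ((hu x).const_mul (2 * K))
    have hD2 : HasDerivAt (fun y : ℝ => (Ω ^ 2 + (y - x₀) ^ 2) ^ 2)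
        (2 * (Ω ^ 2 + (x - x₀) ^ 2) * (2 * (x - x₀))) x := by
      simpa [mul_comm, mul_assoc, mul_left_comm] using (hD x).fun_pow 2
    have h := hN1.fun_div hD2 (pow_ne_zero 2 (hg x))
    refine h.congr_deriv (Eq.symm ?_)
    have h1 : Ω ^ 2 + (x - x₀) ^ 2 ≠ 0 := hg x
    field_simp
    ring
  rw [hderivQ, hQ''.deriv]
  show _ = -(16 * ‖E₀‖ ^ 2) / (B₀ ^ 4 * ((x - x₀) ^ 2 + Ω ^ 2) ^ 2)
  simp only [Q, hQ1, hK]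
  have hB : B₀ ^ 4 ≠ 0 := by positivity
  have h1 : Ω ^ 2 + (x - x₀) ^ 2 ≠ 0 := hg x
  generalize x - x₀ = u
  have h1' : Ω ^ 2 + u ^ 2 ≠ 0 := by positivity
  have h2 : u ^ 2 + Ω ^ 2 ≠ 0 := by positivity
  field_simp
  ring
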